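/- arXiv:2406.05509 — 2 statements merged into one kernel-verified Lean document; each statement's English description precedes it below -/
import Mathlib

section
/- Let V and V' be finite types, let F be a nonempty superset-closed family of finsets of V and F' a nonempty superset-closed family of finsets of V', and let φ be a graph isomorphism from the TAR graph of F to the TAR graph of F'. Then every minimal member M' of F' satisfies M' ⊆ φ(Finset.univ), where Finset.univ (the full vertex set of V) is a member of F since F is nonempty and superset-closed. -/
set_option linter.unusedSectionVars false

variable {V : Type*} [Fintype V] [DecidableEq V]

/-- A family of finsets is superset-closed if it is closed under taking supersets. -/
def SupersetClosed (F : Finset (Finset V)) : Prop :=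
  ∀ ⦃S T : Finset V⦄, S ∈ F → S ⊆ T → T ∈ F

/-- A minimal member of a family: a member no proper subset of which is a member. -/
def IsMinimalMem (F : Finset (Finset V)) (M : Finset V) : Prop :=
  M ∈ F ∧ ∀ M' : Finset V, M' ⊂ M → M' ∉ F

/-- The TAR graph of a family of finsets: vertices are the members of the family,
two members being adjacent iff their symmetric difference has exactly one element. -/
def TARGraph (F : Finset (Finset V)) : SimpleGraph {S : Finset V // S ∈ F} where
  Adj S T := (symmDiff S.1 T.1).card = 1
  symm := ⟨fun (S T : {S : Finset V // S ∈ F}) (h : (symmDiff S.1 T.1).card = 1) =>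
    show (symmDiff T.1 S.1).card = 1 by rwa [symmDiff_comm] at h⟩
  loopless := ⟨fun S h => by simp [symmDiff_self] at h⟩

instance (F : Finset (Finset V)) : DecidableRel (TARGraph F).Adj :=
  fun S T => inferInstanceAs (Decidable ((symmDiff S.1 T.1).card = 1))

lemma univ_mem {F : Finset (Finset V)} (hne : F.Nonempty) (hsup : SupersetClosed F) :
    (Finset.univ : Finset V) ∈ F :=
  hsup hne.choose_spec (Finset.subset_univ _)

private lemma symmDiff_card_eq_iff (A B C : Finset V) :
    (symmDiff A B).card + (symmDiff B C).card = (symmDiff A C).card ↔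
      A ∩ C ⊆ B ∧ B ⊆ A ∪ C := by
  constructor
  · intro h
    have hsub : symmDiff A C ⊆ symmDiff A B ∪ symmDiff B C := symmDiff_triangle A B C
    have h1 : (symmDiff A B ∪ symmDiff B C).card ≤ (symmDiff A C).card := by
      rw [← h]; exact Finset.card_union_le _ _
    have hUn : symmDiff A B ∪ symmDiff B C = symmDiff A C :=
      (Finset.eq_of_subset_of_card_le hsub h1).symm
    have hint : (symmDiff A B ∩ symmDiff B C) = ∅ := by
      have h2 := Finset.card_union_add_card_inter (symmDiff A B) (symmDiff B C)
      rw [hUn, h] at h2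
      exact Finset.card_eq_zero.mp (by omega)
    constructor
    · intro x hx
      simp only [Finset.mem_inter] at hx
      by_contra hxB
      have hx1 : x ∈ symmDiff A B := by simp only [Finset.mem_symmDiff]; tauto
      have hx2 : x ∈ symmDiff B C := by simp only [Finset.mem_symmDiff]; tauto
      have : x ∈ (∅ : Finset V) := hint ▸ Finset.mem_inter.mpr ⟨hx1, hx2⟩
      simp at this
    · intro x hxB
      by_contra hx
      simp only [Finset.mem_union, not_or] at hx
      have hx1 : x ∈ symmDiff A B := by simp only [Finset.mem_symmDiff]; tauto
      have : x ∈ symmDiff A C := hUn ▸ Finset.mem_union_left _ hx1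
      simp only [Finset.mem_symmDiff] at this; tauto
  · rintro ⟨h1, h2⟩
    have hUn : symmDiff A B ∪ symmDiff B C = symmDiff A C := by
      ext x
      have hh1 : x ∈ A ∩ C → x ∈ B := @h1 x
      have hh2 : x ∈ B → x ∈ A ∪ C := @h2 x
      simp only [Finset.mem_union, Finset.mem_symmDiff, Finset.mem_inter] at *
      tauto
    have hdisj : Disjoint (symmDiff A B) (symmDiff B C) := by
      rw [Finset.disjoint_left]
      intro x hx hx2
      have hh1 : x ∈ A ∩ C → x ∈ B := @h1 x
      have hh2 : x ∈ B → x ∈ A ∪ C := @h2 x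
      simp only [Finset.mem_symmDiff, Finset.mem_inter, Finset.mem_union] at *
      tauto
    rw [← Finset.card_union_of_disjoint hdisj, hUn]

private lemma symmDiff_insert_self (s : Finset V) (x : V) (hx : x ∉ s) :
    symmDiff s (insert x s) = {x} := by
  ext a
  simp only [Finset.mem_symmDiff, Finset.mem_insert, Finset.mem_singleton]
  constructor
  · rintro (⟨h1, h2⟩ | ⟨(rfl | h1), h2⟩) <;> tauto
  · rintro rfl; tauto

private lemma symmDiff_erase_self (s : Finset V) (x : V) (hx : x ∈ s) :
    symmDiff s (s.erase x) = {x} := by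
  ext a
  simp only [Finset.mem_symmDiff, Finset.mem_erase, Finset.mem_singleton]
  constructor
  · rintro (⟨h1, h2⟩ | ⟨⟨h1, h2⟩, h3⟩) <;> tauto
  · rintro rfl; tauto

private lemma symmDiff_insert_left {S T : Finset V} {x : V} (hxT : x ∈ T) (hxS : x ∉ S) :
    symmDiff (insert x S) T = (symmDiff S T).erase x := by
  ext a
  by_cases hax : a = x <;>
    simp only [Finset.mem_symmDiff, Finset.mem_erase, Finset.mem_insert, hax] <;> tauto

private lemma symmDiff_erase_left {S T : Finset V} {x : V} (hxT : x ∉ T) (hxS : x ∈ S) :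
    symmDiff (S.erase x) T = (symmDiff S T).erase x := by
  ext a
  by_cases hax : a = x <;>
    simp only [Finset.mem_symmDiff, Finset.mem_erase, hax] <;> tauto

private lemma exists_tar_walk {F : Finset (Finset V)} (hsup : SupersetClosed F)
    (S T : {S : Finset V // S ∈ F}) :
    ∃ p : (TARGraph F).Walk S T, p.length = (symmDiff S.1 T.1).card := by
  generalize hk : (symmDiff S.1 T.1).card = k
  induction k generalizing S with
  | zero =>
    have h0 : symmDiff S.1 T.1 = ∅ := Finset.card_eq_zero.mp hk
    have : S = T := Subtype.ext (by rwa [← Finset.bot_eq_empty, symmDiff_eq_bot] at h0)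
    subst this; exact ⟨SimpleGraph.Walk.nil, rfl⟩
  | succ n ih =>
    by_cases h : (T.1 \ S.1).Nonempty
    · obtain ⟨x, hx⟩ := h
      rw [Finset.mem_sdiff] at hx
      set S₂ : {S : Finset V // S ∈ F} :=
        ⟨insert x S.1, hsup S.2 (Finset.subset_insert x S.1)⟩ with hS₂
      have hadj : (TARGraph F).Adj S S₂ := by
        show (symmDiff S.1 S₂.1).card = 1
        rw [hS₂, symmDiff_insert_self S.1 x hx.2]; simp
      have hcard : (symmDiff S₂.1 T.1).card = n := by
        have := symmDiff_insert_left hx.1 hx.2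
        rw [hS₂]
        simp only [this]
        rw [Finset.card_erase_of_mem (by simp [Finset.mem_symmDiff]; tauto), hk]
        omega
      obtain ⟨p, hp⟩ := ih S₂ hcard
      exact ⟨SimpleGraph.Walk.cons hadj p, by simp [hp]⟩
    · have hTS : T.1 ⊆ S.1 := by
        intro a ha
        by_contra hns
        exact h ⟨a, Finset.mem_sdiff.mpr ⟨ha, hns⟩⟩
      have hne : S.1 ≠ T.1 := by
        intro heq
        rw [heq, symmDiff_self] at hk
        simp at hk
      have h2 : (S.1 \ T.1).Nonempty := by
        rw [Finset.sdiff_nonempty]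
        intro hsub
        exact hne (Finset.Subset.antisymm hsub hTS)
      obtain ⟨x, hx⟩ := h2
      rw [Finset.mem_sdiff] at hx
      set S₂ : {S : Finset V // S ∈ F} :=
        ⟨S.1.erase x, hsup T.2 (Finset.subset_erase.mpr ⟨hTS, hx.2⟩)⟩ with hS₂
      have hadj : (TARGraph F).Adj S S₂ := by
        show (symmDiff S.1 S₂.1).card = 1
        rw [hS₂, symmDiff_erase_self S.1 x hx.1]; simp
      have hcard : (symmDiff S₂.1 T.1).card = n := by
        have := symmDiff_erase_left hx.2 hx.1
        rw [hS₂]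
        simp only [this]
        rw [Finset.card_erase_of_mem (by simp [Finset.mem_symmDiff]; tauto), hk]
        omega
      obtain ⟨p, hp⟩ := ih S₂ hcard
      exact ⟨SimpleGraph.Walk.cons hadj p, by simp [hp]⟩

private lemma card_le_walk_length {F : Finset (Finset V)} {S T : {S : Finset V // S ∈ F}}
    (p : (TARGraph F).Walk S T) : (symmDiff S.1 T.1).card ≤ p.length := by
  induction p with
  | nil => simp [symmDiff_self]
  | @cons u v w h p ih =>
    have hadj : (symmDiff u.1 v.1).card = 1 := h
    calc (symmDiff u.1 w.1).card
        ≤ (symmDiff u.1 v.1 ∪ symmDiff v.1 w.1).card :=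
          Finset.card_le_card (symmDiff_triangle _ _ _)
      _ ≤ (symmDiff u.1 v.1).card + (symmDiff v.1 w.1).card := Finset.card_union_le _ _
      _ ≤ 1 + p.length := by rw [hadj]; omega
      _ = (SimpleGraph.Walk.cons h p).length := by simp [SimpleGraph.Walk.length_cons]; omega

private lemma tar_dist {F : Finset (Finset V)} (hsup : SupersetClosed F)
    (S T : {S : Finset V // S ∈ F}) :
    (TARGraph F).dist S T = (symmDiff S.1 T.1).card := by
  obtain ⟨p, hp⟩ := exists_tar_walk hsup S T
  refine le_antisymm (hp ▸ SimpleGraph.dist_le p) ?_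
  obtain ⟨q, hq⟩ := SimpleGraph.Reachable.exists_walk_length_eq_dist ⟨p⟩
  rw [← hq]; exact card_le_walk_length q

private lemma iso_dist {α β : Type*} {G : SimpleGraph α} {H : SimpleGraph β}
    (φ : G ≃g H) {u v : α} (h : G.Reachable u v) :
    H.dist (φ u) (φ v) = G.dist u v := by
  refine le_antisymm ?_ ?_
  · obtain ⟨p, hp⟩ := h.exists_walk_length_eq_dist
    calc H.dist (φ u) (φ v) ≤ (p.map φ.toHom).length := SimpleGraph.dist_le _
      _ = G.dist u v := by rw [SimpleGraph.Walk.length_map, hp]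
  · obtain ⟨q, hq⟩ := (h.map φ.toHom).exists_walk_length_eq_dist
    calc G.dist u v ≤ ((q.map φ.symm.toHom).copy (by simp) (by simp)).length :=
          SimpleGraph.dist_le _
      _ = H.dist (φ u) (φ v) := by
          rw [SimpleGraph.Walk.length_copy, SimpleGraph.Walk.length_map, hq]; rfl

theorem stmt5 {V' : Type*} [Fintype V'] [DecidableEq V']
    (F : Finset (Finset V)) (hne : F.Nonempty) (hsup : SupersetClosed F)
    (F' : Finset (Finset V')) (hne' : F'.Nonempty) (hsup' : SupersetClosed F')
    (φ : TARGraph F ≃g TARGraph F') :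
    ∀ M' : Finset V', IsMinimalMem F' M' →
      M' ⊆ (φ ⟨Finset.univ, univ_mem hne hsup⟩).1 := by
  intro M' hM'
  obtain ⟨hM'F, hMin⟩ := hM'
  set Uv : {S : Finset V // S ∈ F} := ⟨Finset.univ, univ_mem hne hsup⟩ with hUv
  set Mv' : {S : Finset V' // S ∈ F'} := ⟨M', hM'F⟩ with hMv'
  set Mv : {S : Finset V // S ∈ F} := φ.symm Mv' with hMv
  have hφMv : φ Mv = Mv' := φ.apply_symm_apply Mv'
  have hreach : ∀ (a b : {S : Finset V // S ∈ F}), (TARGraph F).Reachable a b :=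
    fun a b => ⟨(exists_tar_walk hsup a b).choose⟩
  -- transfer of distances through φ
  have hdists : ∀ a b : {S : Finset V // S ∈ F},
      (symmDiff (φ a).1 (φ b).1).card = (symmDiff a.1 b.1).card := by
    intro a b
    rw [← tar_dist hsup', ← tar_dist hsup, iso_dist φ (hreach a b)]
  -- the geodesic-interval condition on the F'-side corresponds to supersets of Mv
  have key : ∀ T : {S : Finset V // S ∈ F},
      ((symmDiff (φ Uv).1 (φ T).1).card + (symmDiff (φ T).1 M').card
        = (symmDiff (φ Uv).1 M').card) ↔ Mv.1 ⊆ T.1 := by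
    intro T
    have hM'val : M' = (φ Mv).1 := by rw [hφMv]
    rw [hM'val, hdists, hdists, hdists, symmDiff_card_eq_iff]
    simp only [hUv, Finset.univ_inter]
    exact and_iff_left (fun a _ => Finset.mem_union_left _ (Finset.mem_univ a))
  have hd : (symmDiff (φ Uv).1 M').card = Fintype.card V - Mv.1.card := by
    have hM'val : M' = (φ Mv).1 := by rw [hφMv]
    rw [hM'val, hdists]
    have : Uv.1 = (⊤ : Finset V) := rfl
    rw [this, top_symmDiff, hnot_eq_compl, Finset.card_compl]
  -- the two intervals
  set I1 : Finset {S : Finset V // S ∈ F} :=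
    Finset.univ.filter (fun T => Mv.1 ⊆ T.1) with hI1def
  set I2 : Finset {S : Finset V' // S ∈ F'} :=
    Finset.univ.filter (fun S' =>
      (symmDiff (φ Uv).1 S'.1).card + (symmDiff S'.1 M').card
        = (symmDiff (φ Uv).1 M').card) with hI2def
  have hI1card : I1.card = 2 ^ (Fintype.card V - Mv.1.card) := by
    have : I1.card = (Finset.Icc Mv.1 (Finset.univ : Finset V)).card := by
      apply Finset.card_bij (fun T _ => T.1)
      · intro T hT
        rw [Finset.mem_filter] at hT
        exact Finset.mem_Icc.mpr ⟨hT.2, Finset.subset_univ _⟩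
      · intro a _ b _ hab
        exact Subtype.ext hab
      · intro s hs
        rw [Finset.mem_Icc] at hs
        exact ⟨⟨s, hsup Mv.2 hs.1⟩, Finset.mem_filter.mpr ⟨Finset.mem_univ _, hs.1⟩, rfl⟩
    rw [this, Finset.card_Icc_finset (Finset.subset_univ Mv.1), Finset.card_univ]
  have hI12 : I1.card = I2.card := by
    apply Finset.card_bij (fun T _ => φ T)
    · intro T hT
      rw [Finset.mem_filter] at hT
      exact Finset.mem_filter.mpr ⟨Finset.mem_univ _, (key T).mpr hT.2⟩
    · intro a _ b _ hab
      exact φ.injective hab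
    · intro S' hS'
      rw [Finset.mem_filter] at hS'
      refine ⟨φ.symm S', Finset.mem_filter.mpr ⟨Finset.mem_univ _, ?_⟩,
        φ.apply_symm_apply S'⟩
      have := (key (φ.symm S')).mp
      rw [φ.apply_symm_apply S'] at this
      exact this hS'.2
  -- image of I2 inside the Boolean interval, with equal cardinality
  have hicc : ((φ Uv).1 ∩ M') ⊆ ((φ Uv).1 ∪ M') := Finset.inter_subset_union
  have hIccCard : (Finset.Icc ((φ Uv).1 ∩ M') ((φ Uv).1 ∪ M')).card
      = 2 ^ (Fintype.card V - Mv.1.card) := by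
    rw [Finset.card_Icc_finset hicc]
    congr 1
    have hsd : symmDiff ((φ Uv).1) M' = ((φ Uv).1 ∪ M') \ ((φ Uv).1 ∩ M') := by
      rw [symmDiff_eq_sup_sdiff_inf]; rfl
    rw [← hd, hsd, Finset.card_sdiff_of_subset hicc]
  have himg : I2.image (fun S' => S'.1)
      = Finset.Icc ((φ Uv).1 ∩ M') ((φ Uv).1 ∪ M') := by
    apply Finset.eq_of_subset_of_card_le
    · intro s hs
      obtain ⟨S', hS', rfl⟩ := Finset.mem_image.mp hs
      rw [Finset.mem_filter] at hS'
      exact Finset.mem_Icc.mpr ((symmDiff_card_eq_iff _ _ _).mp hS'.2)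
    · rw [Finset.card_image_of_injOn (fun a _ b _ h => Subtype.ext h),
        hIccCard, ← hI12, hI1card]
  have hmemIcc : (φ Uv).1 ∩ M' ∈ Finset.Icc ((φ Uv).1 ∩ M') ((φ Uv).1 ∪ M') :=
    Finset.mem_Icc.mpr ⟨Finset.Subset.refl _, hicc⟩
  rw [← himg] at hmemIcc
  obtain ⟨S', _, hval⟩ := Finset.mem_image.mp hmemIcc
  have hmemF' : (φ Uv).1 ∩ M' ∈ F' := hval ▸ S'.2
  have heq : (φ Uv).1 ∩ M' = M' := by
    by_contra hne2
    exact hMin _ (lt_of_le_of_ne Finset.inter_subset_right hne2) hmemF'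
  intro x hx
  rw [← heq] at hx
  exact (Finset.mem_inter.mp hx).1
end

section
/- Let V be a finite type, let F be a nonempty superset-closed family of finsets of V, and let R be a finset of V. Then the following are equivalent: (i) for every S ∈ F the symmetric difference S △ R belongs to F, and the map S ↦ S △ R is a graph automorphism of the TAR graph of F; (ii) R is disjoint from every minimal member of F. -/
variable {V : Type*} [Fintype V] [DecidableEq V]

lemma exists_minimal_mem (F : Finset (Finset V)) (S : Finset V) :
    S ∈ F → ∃ M, M ⊆ S ∧ IsMinimalMem F M := by
  induction S using Finset.strongInductionOn with
  | _ S ih =>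
    intro hS
    by_cases h : ∀ M' ⊂ S, M' ∉ F
    · exact ⟨S, subset_rfl, hS, h⟩
    · push_neg at h
      obtain ⟨M', hlt, hM'⟩ := h
      obtain ⟨M, hMs, hm⟩ := ih M' hlt hM'
      exact ⟨M, hMs.trans hlt.subset, hm⟩

theorem stmt6 (F : Finset (Finset V)) (hne : F.Nonempty) (hsup : SupersetClosed F)
    (R : Finset V) :
    ((∀ S ∈ F, symmDiff S R ∈ F) ∧
      ∃ φ : TARGraph F ≃g TARGraph F,
        ∀ S : {S : Finset V // S ∈ F}, (φ S).1 = symmDiff S.1 R) ↔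
    (∀ M : Finset V, IsMinimalMem F M → Disjoint R M) := by
  constructor
  · rintro ⟨hcl, -⟩ M hM
    by_contra hnd
    rw [Finset.disjoint_left] at hnd
    push_neg at hnd
    obtain ⟨x, hxR, hxM⟩ := hnd
    have hMR : M ∪ R ∈ F := hsup hM.1 Finset.subset_union_left
    have h2 := hcl _ hMR
    have heq : symmDiff (M ∪ R) R = M \ R := by
      ext y
      simp [Finset.mem_symmDiff]
      tauto
    rw [heq] at h2
    exact hM.2 (M \ R) (Finset.ssubset_iff_of_subset Finset.sdiff_subset |>.mpr
      ⟨x, hxM, by simp [hxR]⟩) h2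
  · intro hdisj
    have hcl : ∀ S ∈ F, symmDiff S R ∈ F := by
      intro S hS
      obtain ⟨M, hMS, hm⟩ := exists_minimal_mem F S hS
      have hMd := hdisj M hm
      refine hsup hm.1 ?_
      intro x hx
      rw [Finset.mem_symmDiff]
      exact Or.inl ⟨hMS hx, fun hxR => (Finset.disjoint_left.mp hMd hxR) hx⟩
    refine ⟨hcl, ?_⟩
    have key : ∀ a b : Finset V, symmDiff (symmDiff a R) (symmDiff b R) = symmDiff a b := by
      intro a b
      rw [symmDiff_symmDiff_symmDiff_comm, symmDiff_self, symmDiff_bot]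
    refine ⟨⟨⟨fun S => ⟨symmDiff S.1 R, hcl S.1 S.2⟩, fun S => ⟨symmDiff S.1 R, hcl S.1 S.2⟩,
      fun S => by simp [symmDiff_symmDiff_cancel_right],
      fun S => by simp [symmDiff_symmDiff_cancel_right]⟩, ?_⟩, fun S => rfl⟩
    intro S T
    show (symmDiff (symmDiff S.1 R) (symmDiff T.1 R)).card = 1 ↔ (symmDiff S.1 T.1).card = 1
    rw [key]
end
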